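/- Let u = r^α f(ω) be positively homogeneous of degree α ∈ (0,1) and C² away from 0, with f > 0 at ω ∈ S^{n-1}. In geodesic normal coordinates at ω with the last direction radial, det D²u(ω) = α(α−1) f^{2−n} · det( f ∇²_{S^{n-1}} f + (1/α − 1) ∇_{S^{n-1}} f ⊗ ∇_{S^{n-1}} f + α f² I_{n-1} ). -/

import Mathlib

open scoped RealInnerProductSpace
open Filter Topology

section AuxHomog

variable {E : Type*} [NormedAddCommGroup E] [InnerProductSpace ℝ E]

private lemma aux_hasFDerivAt_inner_self (x : E) :
    HasFDerivAt (fun y : E => ⟪y, y⟫) ((2 : ℝ) • (innerSL ℝ) x) x := by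
  have h : HasFDerivAt (fun y : E => ⟪y, y⟫) _ x := (hasFDerivAt_id x).inner ℝ (hasFDerivAt_id x)
  refine h.congr_fderiv ?_
  ext v
  simp [fderivInnerCLM_apply, real_inner_comm, two_mul]

private lemma aux_hasFDerivAt_rpow_inner_self (p : ℝ) {x : E} (hx : x ≠ 0) :
    HasFDerivAt (fun y : E => ⟪y, y⟫ ^ p) ((2 * p * ⟪x, x⟫ ^ (p - 1)) • (innerSL ℝ) x) x := by
  have hq : ⟪x, x⟫ ≠ (0 : ℝ) := by
    simpa using inner_self_ne_zero (𝕜 := ℝ) (x := x).mpr hx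
  have h := (Real.hasDerivAt_rpow_const (p := p) (Or.inl hq)).comp_hasFDerivAt
    (f := fun y : E => ⟪y, y⟫) x (aux_hasFDerivAt_inner_self x)
  have harr : (2 * p * ⟪x, x⟫ ^ (p - 1)) • (innerSL ℝ) x
      = (p * ⟪x, x⟫ ^ (p - 1)) • ((2 : ℝ) • (innerSL ℝ) x) := by
    rw [smul_smul]; ring_nf
  rw [harr]
  exact h

end AuxHomog

set_option maxHeartbeats 1000000 in
theorem det_hessian_alpha_homogeneous (m : ℕ) (hm : 1 ≤ m) (α : ℝ) (hα : α ∈ Set.Ioo (0 : ℝ) 1)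
    (u : EuclideanSpace ℝ (Fin (m + 1)) → ℝ)
    (hreg : ContDiffOn ℝ 2 u {(0 : EuclideanSpace ℝ (Fin (m + 1)))}ᶜ)
    (hhom : ∀ t : ℝ, 0 < t → ∀ x, u (t • x) = t ^ α * u x)
    (ω : EuclideanSpace ℝ (Fin (m + 1))) (hω : ‖ω‖ = 1) (hpos : 0 < u ω)
    -- `b` is an orthonormal basis whose last vector is the radial direction `ω`;
    -- the first `m` vectors give geodesic normal coordinates on the sphere at `ω`.
    (b : Fin (m + 1) → EuclideanSpace ℝ (Fin (m + 1)))
    (hb : Orthonormal ℝ b) (hblast : b (Fin.last m) = ω)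
    -- `F` is the 0-homogeneous extension of `f := u|_{S^n⁻¹}`, so that the spherical
    -- gradient and Hessian of `f` at `ω` are those of `F` in the tangent directions.
    (F : EuclideanSpace ℝ (Fin (m + 1)) → ℝ)
    (hF : ∀ x : EuclideanSpace ℝ (Fin (m + 1)), F x = u (‖x‖⁻¹ • x)) :
    Matrix.det (Matrix.of fun i j : Fin (m + 1) => iteratedFDeriv ℝ 2 u ω ![b i, b j])
      = α * (α - 1) * (u ω) ^ ((2 : ℝ) - (m + 1)) *
        Matrix.det (Matrix.of fun i j : Fin m =>
          u ω * iteratedFDeriv ℝ 2 F ω ![b i.castSucc, b j.castSucc]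
            + (1 / α - 1) * ⟪gradient F ω, b i.castSucc⟫ * ⟪gradient F ω, b j.castSucc⟫
            + α * (u ω) ^ 2 * (if i = j then 1 else 0)) := by
  obtain ⟨hα0, hα1⟩ := hα
  let E := EuclideanSpace ℝ (Fin (m + 1))
  have hω0 : ω ≠ 0 := by
    intro h; rw [h, norm_zero] at hω; norm_num at hω
  have hmem : ∀ x : E, x ≠ 0 → {(0 : E)}ᶜ ∈ 𝓝 x := fun x hx =>
    isOpen_compl_singleton.mem_nhds (by simpa using hx)
  -- F is C² away from 0
  have hFC2 : ∀ x : E, x ≠ 0 → ContDiffAt ℝ 2 F x := by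
    intro x hx
    have hnx : ‖x‖ ≠ 0 := norm_ne_zero_iff.mpr hx
    have hn : ContDiffAt ℝ 2 (fun y : E => ‖y‖⁻¹ • y) x :=
      ((contDiffAt_norm ℝ hx).inv hnx).smul contDiffAt_id
    have hmem' : ‖x‖⁻¹ • x ≠ (0 : E) := smul_ne_zero (inv_ne_zero hnx) hx
    have hu : ContDiffAt ℝ 2 u (‖x‖⁻¹ • x) := hreg.contDiffAt (hmem _ hmem')
    have hcomp : ContDiffAt ℝ 2 (u ∘ fun y : E => ‖y‖⁻¹ • y) x := ContDiffAt.comp x hu hn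
    exact hcomp.congr_of_eventuallyEq (Filter.Eventually.of_forall fun y => hF y)
  have hFd : ∀ x : E, x ≠ 0 → DifferentiableAt ℝ F x := fun x hx =>
    (hFC2 x hx).differentiableAt two_ne_zero
  -- F is 0-homogeneous
  have hFhom : ∀ t : ℝ, 0 < t → ∀ x : E, F (t • x) = F x := by
    intro t ht x
    rcases eq_or_ne x 0 with rfl | hx
    · simp
    have hnx : ‖x‖ ≠ 0 := norm_ne_zero_iff.mpr hx
    rw [hF, hF, norm_smul, Real.norm_of_nonneg ht.le, smul_smul]
    congr 2
    field_simp
  -- u = ⟪x,x⟫^(α/2) * F away from 0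
  have hu_eq : ∀ x : E, x ≠ 0 → u x = ⟪x, x⟫ ^ (α / 2) * F x := by
    intro x hx
    have hnx : 0 < ‖x‖ := norm_pos_iff.mpr hx
    have h1 : u x = ‖x‖ ^ α * F x := by
      rw [hF, ← hhom ‖x‖ hnx _, smul_smul, mul_inv_cancel₀ hnx.ne', one_smul]
    rw [h1, real_inner_self_eq_norm_sq, ← Real.rpow_natCast ‖x‖ 2,
      ← Real.rpow_mul (norm_nonneg x)]
    rw [show ((2 : ℕ) : ℝ) * (α / 2) = α by push_cast; ring]
  -- first derivative of u away from 0
  have huder : ∀ x : E, x ≠ 0 → HasFDerivAt u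
      ((⟪x, x⟫ ^ (α / 2)) • fderiv ℝ F x
        + F x • ((2 * (α / 2) * ⟪x, x⟫ ^ (α / 2 - 1)) • (innerSL ℝ) x)) x := by
    intro x hx
    have h1 : HasFDerivAt (fun y : E => ⟪y, y⟫ ^ (α / 2) * F y)
        ((⟪x, x⟫ ^ (α / 2)) • fderiv ℝ F x
          + F x • ((2 * (α / 2) * ⟪x, x⟫ ^ (α / 2 - 1)) • (innerSL ℝ) x)) x :=
      (aux_hasFDerivAt_rpow_inner_self (α / 2) hx).mul (hFd x hx).hasFDerivAt
    have hev : u =ᶠ[𝓝 x] fun y : E => ⟪y, y⟫ ^ (α / 2) * F y := by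
      filter_upwards [hmem x hx] with y hy
      exact hu_eq y (by simpa using hy)
    exact h1.congr_of_eventuallyEq hev
  have hq1 : ⟪ω, ω⟫ = (1 : ℝ) := by
    rw [real_inner_self_eq_norm_sq, hω]; norm_num
  -- second derivative of F at ω
  have hFd2 : HasFDerivAt (fderiv ℝ F) (fderiv ℝ (fderiv ℝ F) ω) ω := by
    have h := (hFC2 ω hω0).fderiv_right (m := 1) (by norm_num)
    exact (h.differentiableAt one_ne_zero).hasFDerivAt
  have hud2 : HasFDerivAt (fderiv ℝ u) (fderiv ℝ (fderiv ℝ u) ω) ω := by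
    have h := (hreg.contDiffAt (hmem ω hω0)).fderiv_right (m := 1) (by norm_num)
    exact (h.differentiableAt one_ne_zero).hasFDerivAt
  -- Euler's identity for the 0-homogeneous F
  have hEuler : ∀ x : E, x ≠ 0 → fderiv ℝ F x x = 0 := by
    intro x hx
    have h1 : HasDerivAt (fun t : ℝ => F (t • x)) (fderiv ℝ F x x) 1 := by
      have hsm : HasDerivAt (fun t : ℝ => t • x) x 1 := by
        simpa using (hasDerivAt_id (1 : ℝ)).smul_const x
      have hF1 : HasFDerivAt F (fderiv ℝ F x) ((fun t : ℝ => t • x) 1) := by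
        simpa using (hFd x hx).hasFDerivAt
      exact hF1.comp_hasDerivAt 1 hsm
    have h2 : (fun t : ℝ => F (t • x)) =ᶠ[𝓝 (1 : ℝ)] fun _ => F x := by
      filter_upwards [eventually_gt_nhds one_pos] with t ht
      exact hFhom t ht x
    have h3 : HasDerivAt (fun _ : ℝ => F x) (fderiv ℝ F x x) 1 :=
      h1.congr_of_eventuallyEq h2.symm
    have h4 := (hasDerivAt_const (1 : ℝ) (F x)).unique h3
    exact h4.symm
  have hDFω : fderiv ℝ F ω ω = 0 := hEuler ω hω0
  -- derivative of Euler's identity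
  have hED : ∀ v : E, fderiv ℝ (fderiv ℝ F) ω v ω = -fderiv ℝ F ω v := by
    intro v
    have hφd : HasFDerivAt (fun y : E => fderiv ℝ F y y)
        ((fderiv ℝ F ω).comp (ContinuousLinearMap.id ℝ E)
          + (fderiv ℝ (fderiv ℝ F) ω).flip ω) ω :=
      hFd2.clm_apply (hasFDerivAt_id ω)
    have hφ0 : HasFDerivAt (fun y : E => fderiv ℝ F y y) (0 : E →L[ℝ] ℝ) ω := by
      refine (hasFDerivAt_const (0 : ℝ) ω).congr_of_eventuallyEq ?_
      filter_upwards [hmem ω hω0] with y hy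
      exact hEuler y (by simpa using hy)
    have h := hφd.unique hφ0
    have h' := congrArg (fun L : E →L[ℝ] ℝ => L v) h
    simp only [ContinuousLinearMap.add_apply, ContinuousLinearMap.comp_apply,
      ContinuousLinearMap.coe_id', id_eq, ContinuousLinearMap.flip_apply,
      ContinuousLinearMap.zero_apply] at h'
    linarith
  have hsymm : ∀ v w : E,
      fderiv ℝ (fderiv ℝ F) ω v w = fderiv ℝ (fderiv ℝ F) ω w v :=
    fun v w => (hFC2 ω hω0).isSymmSndFDerivAt (by simp [minSmoothness_of_isRCLikeNormedField]) v w
  -- the key second-derivative formula for u at ω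
  have key : ∀ v w : E, fderiv ℝ (fderiv ℝ u) ω v w =
      α * ⟪ω, v⟫ * fderiv ℝ F ω w + fderiv ℝ (fderiv ℝ F) ω v w
        + fderiv ℝ F ω v * (α * ⟪ω, w⟫)
        + u ω * (α * ((α - 2) * ⟪ω, v⟫ * ⟪ω, w⟫ + ⟪v, w⟫)) := by
    intro v w
    -- pieces
    have hA : HasFDerivAt (fun y : E => ⟪y, y⟫ ^ (α / 2))
        ((2 * (α / 2) * ⟪ω, ω⟫ ^ (α / 2 - 1)) • (innerSL ℝ) ω) ω :=
      aux_hasFDerivAt_rpow_inner_self (α / 2) hω0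
    have hB : HasFDerivAt (fun y : E => ⟪y, y⟫ ^ (α / 2 - 1))
        ((2 * (α / 2 - 1) * ⟪ω, ω⟫ ^ (α / 2 - 1 - 1)) • (innerSL ℝ) ω) ω :=
      aux_hasFDerivAt_rpow_inner_self (α / 2 - 1) hω0
    have hC : HasFDerivAt (fun y : E => ⟪y, w⟫) ((innerSL ℝ) w) ω := by
      refine (((innerSL ℝ (E := E)) w).hasFDerivAt).congr_of_eventuallyEq ?_
      exact Filter.Eventually.of_forall fun y => by simp [real_inner_comm]
    have hDFw : HasFDerivAt (fun y : E => fderiv ℝ F y w)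
        ((fderiv ℝ F ω).comp (0 : E →L[ℝ] E) + (fderiv ℝ (fderiv ℝ F) ω).flip w) ω :=
      hFd2.clm_apply (hasFDerivAt_const w ω)
    have hFval : HasFDerivAt F (fderiv ℝ F ω) ω := (hFd ω hω0).hasFDerivAt
    -- Ψ and its derivative
    have hΨ : HasFDerivAt
        (fun y : E => ⟪y, y⟫ ^ (α / 2) * fderiv ℝ F y w
          + F y * (2 * (α / 2) * ⟪y, y⟫ ^ (α / 2 - 1) * ⟪y, w⟫))
        (((⟪ω, ω⟫ ^ (α / 2)) •
            ((fderiv ℝ F ω).comp (0 : E →L[ℝ] E) + (fderiv ℝ (fderiv ℝ F) ω).flip w)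
          + (fderiv ℝ F ω w) • ((2 * (α / 2) * ⟪ω, ω⟫ ^ (α / 2 - 1)) • (innerSL ℝ) ω))
          + ((F ω • ((2 * (α / 2) * ⟪ω, ω⟫ ^ (α / 2 - 1)) •
                ((innerSL ℝ) w)
              + ⟪ω, w⟫ • ((2 * (α / 2)) •
                ((2 * (α / 2 - 1) * ⟪ω, ω⟫ ^ (α / 2 - 1 - 1)) • (innerSL ℝ) ω))))
            + (2 * (α / 2) * ⟪ω, ω⟫ ^ (α / 2 - 1) * ⟪ω, w⟫) • fderiv ℝ F ω)) ω := by
      exact (hA.mul hDFw).add (hFval.mul (((hB.const_mul (2 * (α / 2))).mul hC)))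
    -- transfer to fderiv u
    have hev : (fun y : E => fderiv ℝ u y w) =ᶠ[𝓝 ω]
        (fun y : E => ⟪y, y⟫ ^ (α / 2) * fderiv ℝ F y w
          + F y * (2 * (α / 2) * ⟪y, y⟫ ^ (α / 2 - 1) * ⟪y, w⟫)) := by
      filter_upwards [hmem ω hω0] with y hy
      rw [(huder y (by simpa using hy)).fderiv]
      simp only [ContinuousLinearMap.add_apply, ContinuousLinearMap.smul_apply,
        innerSL_apply_apply, smul_eq_mul]
    have h1 : HasFDerivAt (fun y : E => fderiv ℝ u y w)
        ((fderiv ℝ u ω).comp (0 : E →L[ℝ] E) + (fderiv ℝ (fderiv ℝ u) ω).flip w) ω :=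
      hud2.clm_apply (hasFDerivAt_const w ω)
    have h2 := hΨ.congr_of_eventuallyEq hev
    have h3 := h1.unique h2
    have h4 := congrArg (fun L : E →L[ℝ] ℝ => L v) h3
    simp only [ContinuousLinearMap.add_apply, ContinuousLinearMap.comp_apply,
      ContinuousLinearMap.zero_apply, ContinuousLinearMap.flip_apply,
      ContinuousLinearMap.smul_apply, innerSL_apply_apply, smul_eq_mul, map_zero,
      hq1, Real.one_rpow, mul_one, one_mul, zero_add] at h4
    rw [h4]
    have hFω : F ω = u ω := by
      rw [hF, hω, inv_one, one_smul]
    rw [hFω, real_inner_comm v w]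
    ring
  -- notation
  set f : ℝ := u ω with hf_def
  have hf0 : f ≠ 0 := ne_of_gt hpos
  have hαne : α ≠ 0 := ne_of_gt hα0
  have hα1ne : α - 1 ≠ 0 := by intro h; apply absurd hα1; push_neg; linarith
  set g : Fin m → ℝ := fun i => fderiv ℝ F ω (b i.castSucc) with hg_def
  set H : Matrix (Fin m) (Fin m) ℝ :=
    Matrix.of fun i j => fderiv ℝ (fderiv ℝ F) ω (b i.castSucc) (b j.castSucc) with hH_def
  set d : ℝ := α * (α - 1) * f with hd_def
  have hd0 : d ≠ 0 := by
    simp only [hd_def]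
    exact mul_ne_zero (mul_ne_zero hαne hα1ne) hf0
  -- inner products of basis vectors
  have hbij : ∀ i j : Fin (m + 1), ⟪b i, b j⟫ = if i = j then (1 : ℝ) else 0 :=
    fun i j => orthonormal_iff_ite.mp hb i j
  have hωb : ∀ i : Fin m, ⟪ω, b i.castSucc⟫ = 0 := by
    intro i
    rw [← hblast, hbij]
    simp [(Fin.castSucc_lt_last i).ne']
  have hbω : ∀ i : Fin m, ⟪b i.castSucc, ω⟫ = 0 := fun i => by
    rw [real_inner_comm]; exact hωb i
  -- blocks
  set A : Matrix (Fin m) (Fin m) ℝ :=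
    Matrix.of (fun i j => H i j + α * f * (if i = j then (1 : ℝ) else 0)) with hA_def
  set B : Matrix (Fin m) (Fin 1) ℝ := Matrix.of (fun i _ => (α - 1) * g i) with hB_def
  set C : Matrix (Fin 1) (Fin m) ℝ := Matrix.of (fun _ j => (α - 1) * g j) with hC_def
  set D : Matrix (Fin 1) (Fin 1) ℝ := Matrix.of (fun _ _ => d) with hD_def
  -- entries of the Hessian of u
  have hlast : finSumFinEquiv.symm (Fin.last m) = Sum.inr (0 : Fin 1) := by
    rw [Equiv.symm_apply_eq, finSumFinEquiv_apply_right]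
    ext; simp
  have hcast : ∀ i : Fin m, finSumFinEquiv.symm i.castSucc = Sum.inl i := by
    intro i
    rw [Equiv.symm_apply_eq, finSumFinEquiv_apply_left]
    rfl
  have hM : (Matrix.of fun i j : Fin (m + 1) => iteratedFDeriv ℝ 2 u ω ![b i, b j])
      = (Matrix.fromBlocks A B C D).submatrix finSumFinEquiv.symm finSumFinEquiv.symm := by
    ext i j
    have hit : iteratedFDeriv ℝ 2 u ω ![b i, b j]
        = fderiv ℝ (fderiv ℝ u) ω (b i) (b j) := by
      rw [iteratedFDeriv_two_apply]
      simp
    rw [Matrix.of_apply, hit, Matrix.submatrix_apply]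
    refine Fin.lastCases ?_ (fun i' => ?_) i
    · refine Fin.lastCases ?_ (fun j' => ?_) j
      · -- (last, last)
        rw [hlast, hblast, key]
        simp only [Matrix.fromBlocks_apply₂₂, hD_def, Matrix.of_apply]
        rw [hDFω, hED ω, hDFω, hq1, hd_def]
        ring
      · -- (last, j')
        rw [hlast, hcast, hblast, key]
        simp only [Matrix.fromBlocks_apply₂₁, hC_def, Matrix.of_apply]
        rw [hsymm ω (b j'.castSucc), hED (b j'.castSucc), hq1, hωb j', hDFω, hg_def]
        ring
    · refine Fin.lastCases ?_ (fun j' => ?_) j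
      · -- (i', last)
        rw [hlast, hcast, hblast, key]
        simp only [Matrix.fromBlocks_apply₁₂, hB_def, Matrix.of_apply]
        rw [hED (b i'.castSucc), hq1, hωb i', hbω i', hDFω, hg_def]
        ring
      · -- (i', j')
        rw [hcast, hcast, key]
        simp only [Matrix.fromBlocks_apply₁₁, hA_def, Matrix.of_apply]
        rw [hωb i', hωb j', hbij]
        simp only [hH_def, Matrix.of_apply, Fin.castSucc_inj]
        ring_nf
  -- the Schur complement
  letI : Invertible D := by
    refine ⟨Matrix.of (fun _ _ => d⁻¹), ?_, ?_⟩
    · ext i j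
      simp [Matrix.mul_apply, Fin.sum_univ_one, hD_def, inv_mul_cancel₀ hd0,
        Matrix.one_apply, Subsingleton.elim i j]
    · ext i j
      simp [Matrix.mul_apply, Fin.sum_univ_one, hD_def, mul_inv_cancel₀ hd0,
        Matrix.one_apply, Subsingleton.elim i j]
  have hinv : (⅟D : Matrix (Fin 1) (Fin 1) ℝ) = Matrix.of (fun _ _ => d⁻¹) := rfl
  have hdetM : (Matrix.of fun i j : Fin (m + 1) =>
      iteratedFDeriv ℝ 2 u ω ![b i, b j]).det = d * (A - B * ⅟D * C).det := by
    rw [hM, Matrix.det_submatrix_equiv_self, Matrix.det_fromBlocks₂₂]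
    congr 1
    rw [Matrix.det_fin_one]
    rfl
  -- the RHS matrix
  have hN : (Matrix.of fun i j : Fin m =>
      u ω * iteratedFDeriv ℝ 2 F ω ![b i.castSucc, b j.castSucc]
        + (1 / α - 1) * ⟪gradient F ω, b i.castSucc⟫ * ⟪gradient F ω, b j.castSucc⟫
        + α * (u ω) ^ 2 * (if i = j then 1 else 0))
      = f • (A - B * ⅟D * C) := by
    ext i j
    have hit : iteratedFDeriv ℝ 2 F ω ![b i.castSucc, b j.castSucc]
        = fderiv ℝ (fderiv ℝ F) ω (b i.castSucc) (b j.castSucc) := by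
      rw [iteratedFDeriv_two_apply]
      simp
    have hgr : ∀ k : Fin m, ⟪gradient F ω, b k.castSucc⟫ = g k := fun k =>
      InnerProductSpace.toDual_symm_apply
    rw [Matrix.of_apply, hit, hgr, hgr]
    simp only [Matrix.smul_apply, Matrix.sub_apply, hinv, Matrix.mul_apply,
      Fin.sum_univ_one, hA_def, hB_def, hC_def, Matrix.of_apply, smul_eq_mul]
    have : fderiv ℝ (fderiv ℝ F) ω (b i.castSucc) (b j.castSucc) = H i j := rfl
    rw [this, hd_def]
    by_cases hij : i = j
    · simp only [hij, if_pos rfl]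
      field_simp
      ring
    · simp only [hij, if_neg hij]
      field_simp
      ring
  rw [hdetM, hN, Matrix.det_smul, Fintype.card_fin]
  have hrp : (u ω) ^ ((2 : ℝ) - (m + 1)) * (u ω) ^ m = u ω := by
    rw [← Real.rpow_natCast (u ω) m, ← Real.rpow_add hpos]
    rw [show (2 : ℝ) - (m + 1) + m = 1 by push_cast; ring, Real.rpow_one]
  calc d * (A - B * ⅟D * C).det
      = α * (α - 1) * ((u ω) ^ ((2 : ℝ) - (m + 1)) * (u ω) ^ m) *
        (A - B * ⅟D * C).det := by rw [hrp, hd_def, hf_def]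
    _ = α * (α - 1) * (u ω) ^ ((2 : ℝ) - (m + 1)) *
        ((u ω) ^ m * (A - B * ⅟D * C).det) := by ring
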